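/- Let H be a Hopf algebra and A a right partial H^op-module algebra. The map γ₀ : H^opcop → H^op#A, h ↦ h#1_A, is a partial representation of the Hopf algebra H^opcop in the right partial smash product algebra H^op#A. -/

import Mathlib

open TensorProduct

section Smash

variable {k H A : Type*} [CommRing k] [Ring H] [HopfAlgebra k H] [Ring A] [Algebra k A]

/-- The smash-type multiplication on `H ⊗ A` associated to a bilinear multiplication
`mH` on `H` (e.g. the given or the opposite one) and a right action-type map
`ract : A →ₗ H →ₗ A`:  on pure tensors,
`(g ⊗ b)(h ⊗ a) = Σ mH g h₍₁₎ ⊗ (b·h₍₂₎) a`. -/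
noncomputable def rsmashMul (mH : H →ₗ[k] H →ₗ[k] H) (ract : A →ₗ[k] H →ₗ[k] A) :
    (H ⊗[k] A) ⊗[k] (H ⊗[k] A) →ₗ[k] H ⊗[k] A :=
  (TensorProduct.map (TensorProduct.lift mH)
      ((LinearMap.mul' k A) ∘ₗ (LinearMap.rTensor A (TensorProduct.lift ract)) ∘ₗ
        (TensorProduct.assoc k A H A).symm.toLinearMap)) ∘ₗ
  (TensorProduct.tensorTensorTensorComm k H A H (H ⊗[k] A)).toLinearMap ∘ₗ
  (LinearMap.lTensor (H ⊗[k] A)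
      ((TensorProduct.assoc k H H A).toLinearMap ∘ₗ
        (LinearMap.rTensor A (Coalgebra.comul (R := k)))))

/-- The curried (bilinear) form of the smash-type multiplication. -/
noncomputable def rsmashMul₂ (mH : H →ₗ[k] H →ₗ[k] H) (ract : A →ₗ[k] H →ₗ[k] A) :
    (H ⊗[k] A) →ₗ[k] (H ⊗[k] A) →ₗ[k] H ⊗[k] A :=
  TensorProduct.curry (rsmashMul mH ract)

/-- The right partial smash product `H # A := (1_H ⊗ 1_A)(H ⊗ A)`, spanned by the
elements `h # a := (1 ⊗ 1)(h ⊗ a) = Σ h₍₁₎ ⊗ (1·h₍₂₎)a`. -/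
noncomputable def rsmashSub (mH : H →ₗ[k] H →ₗ[k] H) (ract : A →ₗ[k] H →ₗ[k] A) :
    Submodule k (H ⊗[k] A) :=
  Submodule.span k
    {z | ∃ (h : H) (a : A), z = rsmashMul₂ mH ract ((1 : H) ⊗ₜ (1 : A)) (h ⊗ₜ a)}

end Smash

/-- Sweedler-style sum `h ↦ Σ f(h₍₁₎) * g(h₍₂₎)`. -/
noncomputable def sweedler {k H B : Type*} [CommRing k] [Ring H] [HopfAlgebra k H]
    [AddCommGroup B] [Module k B]
    (mul : B →ₗ[k] B →ₗ[k] B) (f g : H →ₗ[k] B) : H →ₗ[k] B :=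
  TensorProduct.lift ((mul ∘ₗ f).compl₂ g) ∘ₗ Coalgebra.comul

/-- Coopposite Sweedler sum `h ↦ Σ f(h₍₂₎) * g(h₍₁₎)` (Sweedler sum for `Δᶜᵒᵖ = τ ∘ Δ`). -/
noncomputable def sweedlerCoop {k H B : Type*} [CommRing k] [Ring H] [HopfAlgebra k H]
    [AddCommGroup B] [Module k B]
    (mul : B →ₗ[k] B →ₗ[k] B) (f g : H →ₗ[k] B) : H →ₗ[k] B :=
  TensorProduct.lift ((mul ∘ₗ f).compl₂ g) ∘ₗ
    (TensorProduct.comm k H H).toLinearMap ∘ₗ Coalgebra.comul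

/-- A symmetric right partial action of the opposite Hopf algebra `H^op` on `A`
(the multiplication of `H^op` is `x ·op y = y * x`, the comultiplication is that of `H`):
(RPA1) `a·1 = a`; (RPA2) `(ab)·h = (a·h₍₁₎)(b·h₍₂₎)`;
(RPA3) `(a·g)·h = (a·(g ·op h₍₁₎))(1·h₍₂₎) = (1·h₍₁₎)(a·(g ·op h₍₂₎))`. -/
structure IsRightPartialActionOp (k : Type*) {H A : Type*} [CommRing k] [Ring H]
    [HopfAlgebra k H] [Ring A] [Algebra k A] (ract : A →ₗ[k] H →ₗ[k] A) : Prop where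
  rpa1 : ∀ a : A, ract a 1 = a
  rpa2 : ∀ (a b : A) (h : H),
    ract (a * b) h = sweedler (LinearMap.mul k A) (ract a) (ract b) h
  rpa3 : ∀ (a : A) (g h : H),
    ract (ract a g) h =
      sweedler (LinearMap.mul k A) ((ract a) ∘ₗ LinearMap.mulRight k g) (ract 1) h
  rpa3' : ∀ (a : A) (g h : H),
    ract (ract a g) h =
      sweedler (LinearMap.mul k A) (ract 1) ((ract a) ∘ₗ LinearMap.mulRight k g) h

section OpSmash

variable {k H A : Type*} [CommRing k] [Ring H] [HopfAlgebra k H] [Ring A] [Algebra k A]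

/-- The multiplication of the right partial smash product `H^op # A`:
`(g⊗b)(h⊗a) = Σ (g ·op h₍₁₎) ⊗ (b·h₍₂₎)a = Σ h₍₁₎g ⊗ (b·h₍₂₎)a`. -/
noncomputable def opSmashMul₂ (ract : A →ₗ[k] H →ₗ[k] A) :
    (H ⊗[k] A) →ₗ[k] (H ⊗[k] A) →ₗ[k] H ⊗[k] A :=
  rsmashMul₂ (LinearMap.mul k H).flip ract

/-- The right partial smash product `H^op # A = (1⊗1)(H^op⊗A)` as a subspace of `H ⊗ A`. -/
noncomputable def opSmashSub (ract : A →ₗ[k] H →ₗ[k] A) : Submodule k (H ⊗[k] A) :=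
  rsmashSub (LinearMap.mul k H).flip ract

/-- `φ₀ : A → H^op # A`, `a ↦ 1_H # a`. -/
noncomputable def opSmashPhi0 (ract : A →ₗ[k] H →ₗ[k] A) : A →ₗ[k] H ⊗[k] A :=
  (opSmashMul₂ ract ((1 : H) ⊗ₜ (1 : A))) ∘ₗ (TensorProduct.mk k H A (1 : H))

/-- `γ₀ : H^opcop → H^op # A`, `h ↦ h # 1_A`. -/
noncomputable def opSmashGamma0 (ract : A →ₗ[k] H →ₗ[k] A) : H →ₗ[k] H ⊗[k] A :=
  (opSmashMul₂ ract ((1 : H) ⊗ₜ (1 : A))) ∘ₗ ((TensorProduct.mk k H A).flip (1 : A))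

end OpSmash


/-! ### Auxiliary development -/

set_option maxHeartbeats 1000000
set_option synthInstance.maxHeartbeats 400000

noncomputable section

namespace PartialRepAux

open Coalgebra


variable {k H : Type*} [CommRing k] [Ring H] [HopfAlgebra k H]

/-- Apply a linear map to a `Repr` sum. -/
lemma repr_sum_eq {M : Type*} [AddCommGroup M] [Module k M] {v : H} {ι_r : Type*} (r : Repr k v ι_r)
    (Φ : H ⊗[k] H →ₗ[k] M) :
    ∑ i ∈ r.index, Φ (r.left i ⊗ₜ r.right i) = Φ (comul v) := by
  rw [← r.eq, map_sum]

/-- Coassociativity for sums against an arbitrary linear map. -/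
lemma coassoc_sum {M : Type*} [AddCommGroup M] [Module k M] {v : H} {ι_r : Type*} (r : Repr k v ι_r)
    {κ Λ : ι_r → Type*} (a₁ : ∀ i, Repr k (r.left i) (κ i)) (a₂ : ∀ i, Repr k (r.right i) (Λ i))
    (Φ : H ⊗[k] (H ⊗[k] H) →ₗ[k] M) :
    ∑ i ∈ r.index, ∑ j ∈ (a₁ i).index,
      Φ ((a₁ i).left j ⊗ₜ ((a₁ i).right j ⊗ₜ r.right i)) =
    ∑ i ∈ r.index, ∑ j ∈ (a₂ i).index,
      Φ (r.left i ⊗ₜ ((a₂ i).left j ⊗ₜ (a₂ i).right j)) := by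
  have h := congrArg Φ (Coalgebra.sum_tmul_tmul_eq r a₁ a₂)
  simpa only [map_sum] using h

lemma counit_left_sum {M : Type*} [AddCommGroup M] [Module k M] {v : H} {ι_r : Type*} (r : Repr k v ι_r)
    (Φ : H →ₗ[k] M) :
    ∑ i ∈ r.index, counit (R := k) (r.left i) • Φ (r.right i) = Φ v := by
  have h := congrArg (TensorProduct.lid k M) (Coalgebra.sum_counit_tmul_map_eq Φ v (repr := r))
  simpa only [map_sum, lid_tmul, one_smul] using h

lemma counit_right_sum {M : Type*} [AddCommGroup M] [Module k M] {v : H} {ι_r : Type*} (r : Repr k v ι_r)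
    (Φ : H →ₗ[k] M) :
    ∑ i ∈ r.index, counit (R := k) (r.right i) • Φ (r.left i) = Φ v := by
  have h := congrArg (TensorProduct.rid k M) (Coalgebra.sum_map_tmul_counit_eq Φ v (repr := r))
  simpa only [map_sum, rid_tmul, one_smul] using h

lemma antipode_mul_sum {M : Type*} [AddCommGroup M] [Module k M] {v : H} {ι_r : Type*} (r : Repr k v ι_r)
    (Φ : H →ₗ[k] M) :
    ∑ i ∈ r.index, Φ ((HopfAlgebra.antipode k : H →ₗ[k] H) (r.left i) * r.right i) =
      counit (R := k) v • Φ 1 := by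
  have h := congrArg Φ (HopfAlgebra.sum_antipode_mul_eq_smul r)
  simpa only [map_sum, map_smul] using h

lemma mul_antipode_sum {M : Type*} [AddCommGroup M] [Module k M] {v : H} {ι_r : Type*} (r : Repr k v ι_r)
    (Φ : H →ₗ[k] M) :
    ∑ i ∈ r.index, Φ (r.left i * (HopfAlgebra.antipode k : H →ₗ[k] H) (r.right i)) =
      counit (R := k) v • Φ 1 := by
  have h := congrArg Φ (HopfAlgebra.sum_mul_antipode_eq_smul r)
  simpa only [map_sum, map_smul] using h

section Conv

variable {B : Type*} [Ring B] [Algebra k B]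

/-- Convolution product of linear maps `H →ₗ B`. -/
def conv (f g : H →ₗ[k] B) : H →ₗ[k] B :=
  LinearMap.mul' k B ∘ₗ TensorProduct.map f g ∘ₗ (comul : H →ₗ[k] H ⊗[k] H)

lemma conv_repr (f g : H →ₗ[k] B) {v : H} {ι_r : Type*} (r : Repr k v ι_r) :
    conv f g v = ∑ i ∈ r.index, f (r.left i) * g (r.right i) := by
  rw [conv, LinearMap.comp_apply, LinearMap.comp_apply, ← r.eq]
  simp only [map_sum, TensorProduct.map_tmul, LinearMap.mul'_apply]

/-- The convolution unit. -/
def convOne : H →ₗ[k] B := Algebra.linearMap k B ∘ₗ (counit : H →ₗ[k] k)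

lemma conv_convOne (f : H →ₗ[k] B) : conv f convOne = f := by
  ext v
  rw [conv_repr f convOne (ℛ k v)]
  have : ∀ i ∈ (ℛ k v).index,
      f ((ℛ k v).left i) * convOne (k := k) (B := B) ((ℛ k v).right i) =
      counit (R := k) ((ℛ k v).right i) • f ((ℛ k v).left i) := by
    intro i _
    rw [convOne, LinearMap.comp_apply, Algebra.linearMap_apply,
      ← Algebra.commutes ((counit (R := k) ((ℛ k v).right i))) (f ((ℛ k v).left i)),
      ← Algebra.smul_def]
  rw [Finset.sum_congr rfl this, counit_right_sum (ℛ k v) f]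

lemma convOne_conv (f : H →ₗ[k] B) : conv convOne f = f := by
  ext v
  rw [conv_repr convOne f (ℛ k v)]
  have : ∀ i ∈ (ℛ k v).index,
      convOne (k := k) (B := B) ((ℛ k v).left i) * f ((ℛ k v).right i) =
      counit (R := k) ((ℛ k v).left i) • f ((ℛ k v).right i) := by
    intro i _
    rw [convOne, LinearMap.comp_apply, Algebra.linearMap_apply,
      ← Algebra.smul_def ((counit (R := k) ((ℛ k v).left i))) (f ((ℛ k v).right i))]
  rw [Finset.sum_congr rfl this, counit_left_sum (ℛ k v) f]

lemma conv_assoc (f g h : H →ₗ[k] B) : conv (conv f g) h = conv f (conv g h) := by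
  ext v
  set r := ℛ k v
  set a₁ := fun i => ℛ k (r.left i)
  set a₂ := fun i => ℛ k (r.right i)
  set Φ : H ⊗[k] (H ⊗[k] H) →ₗ[k] B :=
    LinearMap.mul' k B ∘ₗ TensorProduct.map f (LinearMap.mul' k B ∘ₗ TensorProduct.map g h)
    with hΦ
  have hl : conv (conv f g) h v =
      ∑ i ∈ r.index, ∑ j ∈ (a₁ i).index,
        Φ ((a₁ i).left j ⊗ₜ ((a₁ i).right j ⊗ₜ r.right i)) := by
    rw [conv_repr (conv f g) h r]
    refine Finset.sum_congr rfl fun i _ => ?_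
    rw [conv_repr f g (a₁ i), Finset.sum_mul]
    refine Finset.sum_congr rfl fun j _ => ?_
    simp only [hΦ, LinearMap.comp_apply, TensorProduct.map_tmul, LinearMap.mul'_apply,
      mul_assoc]
  have hr : conv f (conv g h) v =
      ∑ i ∈ r.index, ∑ j ∈ (a₂ i).index,
        Φ (r.left i ⊗ₜ ((a₂ i).left j ⊗ₜ (a₂ i).right j)) := by
    rw [conv_repr f (conv g h) r]
    refine Finset.sum_congr rfl fun i _ => ?_
    rw [conv_repr g h (a₂ i), Finset.mul_sum]
    refine Finset.sum_congr rfl fun j _ => ?_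
    simp only [hΦ, LinearMap.comp_apply, TensorProduct.map_tmul, LinearMap.mul'_apply]
  rw [hl, hr, coassoc_sum r a₁ a₂ Φ]

end Conv

section AntipodeComul

/-- Local abbreviation for the antipode. -/
abbrev aS : H →ₗ[k] H := HopfAlgebra.antipode k

/-- The co-opposite comultiplication composed with `S ⊗ S`. -/
def comulAnti : H →ₗ[k] H ⊗[k] H :=
  (TensorProduct.comm k H H).toLinearMap ∘ₗ TensorProduct.map (aS (k := k)) (aS (k := k)) ∘ₗ comul

lemma comulAnti_apply {v : H} {ι_r : Type*} (r : Repr k v ι_r) :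
    comulAnti (k := k) (H := H) v = ∑ i ∈ r.index, (aS (k := k)) (r.right i) ⊗ₜ (aS (k := k)) (r.left i) := by
  rw [comulAnti, LinearMap.comp_apply, LinearMap.comp_apply, LinearEquiv.coe_coe, ← r.eq]
  simp only [map_sum, TensorProduct.map_tmul, TensorProduct.comm_tmul]

lemma conv_comulS_comul :
    conv (comul ∘ₗ (aS (k := k))) (comul : H →ₗ[k] H ⊗[k] H) = convOne := by
  ext v
  rw [conv_repr _ _ (ℛ k v)]
  have : ∀ i ∈ (ℛ k v).index,
      (comul ∘ₗ (aS (k := k))) ((ℛ k v).left i) * comul ((ℛ k v).right i) =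
        (comul : H →ₗ[k] H ⊗[k] H) ((aS (k := k)) ((ℛ k v).left i) * (ℛ k v).right i) := by
    intro i _
    rw [LinearMap.comp_apply, Bialgebra.comul_mul]
  rw [Finset.sum_congr rfl this, antipode_mul_sum (ℛ k v) comul]
  simp only [Bialgebra.comul_one, convOne, LinearMap.comp_apply, Algebra.linearMap_apply,
    Algebra.algebraMap_eq_smul_one]

lemma conv_comul_comulAnti :
    conv (comul : H →ₗ[k] H ⊗[k] H) (comulAnti (k := k) (H := H)) = convOne := by
  ext v
  set r := ℛ k v with hr
  set a₁ : ∀ i, Repr k (r.left i) (H × H) := fun i => ℛ k (r.left i) with ha₁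
  set a₂ : ∀ i, Repr k (r.right i) (H × H) := fun i => ℛ k (r.right i) with ha₂
  set Φ : H ⊗[k] (H ⊗[k] H) →ₗ[k] H ⊗[k] H :=
    LinearMap.mul' k (H ⊗[k] H) ∘ₗ
      LinearMap.lTensor (H ⊗[k] H) (comulAnti (k := k) (H := H)) ∘ₗ
      (TensorProduct.assoc k H H H).symm.toLinearMap with hΦ
  have hΦ_apply : ∀ (x y z : H), Φ (x ⊗ₜ (y ⊗ₜ z)) = (x ⊗ₜ y) * comulAnti (k := k) z := by
    intro x y z
    simp only [hΦ, LinearMap.comp_apply, LinearEquiv.coe_coe, TensorProduct.assoc_symm_tmul,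
      LinearMap.lTensor_tmul, LinearMap.mul'_apply]
  have step1 : conv (comul : H →ₗ[k] H ⊗[k] H) (comulAnti (k := k) (H := H)) v =
      ∑ i ∈ r.index, ∑ j ∈ (a₁ i).index,
        Φ ((a₁ i).left j ⊗ₜ ((a₁ i).right j ⊗ₜ r.right i)) := by
    rw [conv_repr _ _ r]
    refine Finset.sum_congr rfl fun i _ => ?_
    rw [← (a₁ i).eq, Finset.sum_mul]
    exact Finset.sum_congr rfl fun j _ => (hΦ_apply _ _ _).symm
  rw [step1, coassoc_sum r a₁ a₂ Φ]
  have step3 : ∀ i ∈ r.index,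
      ∑ j ∈ (a₂ i).index, Φ (r.left i ⊗ₜ ((a₂ i).left j ⊗ₜ (a₂ i).right j)) =
        (r.left i * (aS (k := k)) (r.right i)) ⊗ₜ (1 : H) := by
    intro i _
    set L := r.left i with hL
    set ΦL : H ⊗[k] (H ⊗[k] H) →ₗ[k] H ⊗[k] H :=
      (TensorProduct.map (LinearMap.mulLeft k L) (LinearMap.mul' k H)) ∘ₗ
        (TensorProduct.comm k (H ⊗[k] H) H).toLinearMap ∘ₗ
        (TensorProduct.assoc k H H H).symm.toLinearMap ∘ₗ
        (LinearMap.lTensor H (TensorProduct.map (aS (k := k)) (aS (k := k)))) with hΦL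
    have hΦL_apply : ∀ (x y z : H),
        ΦL (x ⊗ₜ (y ⊗ₜ z)) = (L * (aS (k := k)) z) ⊗ₜ (x * (aS (k := k)) y) := by
      intro x y z
      simp only [hΦL, LinearMap.comp_apply, LinearEquiv.coe_coe, LinearMap.lTensor_tmul,
        TensorProduct.map_tmul, TensorProduct.assoc_symm_tmul, TensorProduct.comm_tmul,
        LinearMap.mul'_apply, LinearMap.mulLeft_apply]
    set b₁ : ∀ j, Repr k ((a₂ i).left j) (H × H) := fun j => ℛ k ((a₂ i).left j) with hb₁
    set b₂ : ∀ j, Repr k ((a₂ i).right j) (H × H) := fun j => ℛ k ((a₂ i).right j) with hb₂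
    have e1 : ∀ j ∈ (a₂ i).index,
        Φ (r.left i ⊗ₜ ((a₂ i).left j ⊗ₜ (a₂ i).right j)) =
          ∑ m ∈ (b₂ j).index,
            ΦL ((a₂ i).left j ⊗ₜ ((b₂ j).left m ⊗ₜ (b₂ j).right m)) := by
      intro j _
      rw [hΦ_apply, comulAnti_apply (b₂ j), Finset.mul_sum]
      refine Finset.sum_congr rfl fun m _ => ?_
      rw [hΦL_apply, Algebra.TensorProduct.tmul_mul_tmul]
    rw [Finset.sum_congr rfl e1, ← coassoc_sum (a₂ i) b₁ b₂ ΦL]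
    have e2 : ∀ j ∈ (a₂ i).index,
        ∑ m ∈ (b₁ j).index,
          ΦL ((b₁ j).left m ⊗ₜ ((b₁ j).right m ⊗ₜ (a₂ i).right j)) =
          counit (R := k) ((a₂ i).left j) •
            ((L * (aS (k := k)) ((a₂ i).right j)) ⊗ₜ (1 : H)) := by
      intro j _
      have : ∀ m ∈ (b₁ j).index,
          ΦL ((b₁ j).left m ⊗ₜ ((b₁ j).right m ⊗ₜ (a₂ i).right j)) =
            (TensorProduct.mk k H H (L * (aS (k := k)) ((a₂ i).right j)))
              ((b₁ j).left m * (aS (k := k)) ((b₁ j).right m)) := by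
        intro m _
        rw [hΦL_apply]
        rfl
      rw [Finset.sum_congr rfl this,
        mul_antipode_sum (b₁ j) (TensorProduct.mk k H H (L * (aS (k := k)) ((a₂ i).right j)))]
      simp only [TensorProduct.mk_apply]
    rw [Finset.sum_congr rfl e2]
    have e3 := counit_left_sum (a₂ i) (((TensorProduct.mk k H H).flip (1 : H)) ∘ₗ
        LinearMap.mulLeft k L ∘ₗ (aS (k := k)))
    simpa only [LinearMap.comp_apply, LinearMap.flip_apply, TensorProduct.mk_apply,
      LinearMap.mulLeft_apply] using e3
  rw [Finset.sum_congr rfl step3]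
  have e4 := mul_antipode_sum r ((TensorProduct.mk k H H).flip (1 : H))
  simp only [LinearMap.flip_apply, TensorProduct.mk_apply] at e4
  rw [e4]
  simp only [convOne, LinearMap.comp_apply, Algebra.linearMap_apply,
    Algebra.algebraMap_eq_smul_one]
  rfl

/-- The antipode is an anti-coalgebra morphism. -/
lemma comul_comp_antipode :
    (comul : H →ₗ[k] H ⊗[k] H) ∘ₗ (aS (k := k)) = comulAnti (k := k) (H := H) := by
  have h1 := conv_comulS_comul (k := k) (H := H)
  have h2 := conv_comul_comulAnti (k := k) (H := H)
  calc (comul : H →ₗ[k] H ⊗[k] H) ∘ₗ (aS (k := k))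
      = conv ((comul : H →ₗ[k] H ⊗[k] H) ∘ₗ (aS (k := k))) convOne := (conv_convOne _).symm
    _ = conv ((comul : H →ₗ[k] H ⊗[k] H) ∘ₗ (aS (k := k)))
          (conv (comul : H →ₗ[k] H ⊗[k] H) (comulAnti (k := k) (H := H))) := by rw [h2]
    _ = conv (conv ((comul : H →ₗ[k] H ⊗[k] H) ∘ₗ (aS (k := k))) (comul : H →ₗ[k] H ⊗[k] H))
          (comulAnti (k := k) (H := H)) := (conv_assoc _ _ _).symm
    _ = conv convOne (comulAnti (k := k) (H := H)) := by rw [h1]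
    _ = comulAnti (k := k) (H := H) := convOne_conv _

/-- Transport a `Repr` along the antipode. -/
def reprAntipode {v : H} {ι_r : Type*} (r : Repr k v ι_r) : Repr k ((aS (k := k)) v) ι_r where
  index := r.index
  left := fun i => (aS (k := k)) (r.right i)
  right := fun i => (aS (k := k)) (r.left i)
  eq := by
    rw [← LinearMap.comp_apply (comul (R := k)) (aS (k := k)) v, comul_comp_antipode,
      comulAnti_apply r]

@[simp] lemma reprAntipode_index {v : H} {ι_r : Type*} (r : Repr k v ι_r) :
    (reprAntipode r).index = r.index := rfl

@[simp] lemma reprAntipode_left {v : H} {ι_r : Type*} (r : Repr k v ι_r) (i : r.ι) :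
    (reprAntipode r).left i = (aS (k := k)) (r.right i) := rfl

@[simp] lemma reprAntipode_right {v : H} {ι_r : Type*} (r : Repr k v ι_r) (i : r.ι) :
    (reprAntipode r).right i = (aS (k := k)) (r.left i) := rfl

end AntipodeComul



section SmashLayer

variable {A : Type*} [Ring A] [Algebra k A]

/-- Transport of `Repr`s along multiplication. -/
@[reducible] def reprMul {x y : H} {ι_rx : Type*} (rx : Repr k x ι_rx) {ι_ry : Type*} (ry : Repr k y ι_ry) : Repr k (x * y) (ι_rx × ι_ry) where
  index := rx.index ×ˢ ry.index
  left := fun p => rx.left p.1 * ry.left p.2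
  right := fun p => rx.right p.1 * ry.right p.2
  eq := by
    rw [Finset.sum_product]
    rw [show ∑ i ∈ rx.index, ∑ j ∈ ry.index,
        (rx.left i * ry.left j) ⊗ₜ[k] (rx.right i * ry.right j) =
        (∑ i ∈ rx.index, rx.left i ⊗ₜ[k] rx.right i) *
          (∑ j ∈ ry.index, ry.left j ⊗ₜ[k] ry.right j) by
      rw [Finset.sum_mul_sum]
      exact Finset.sum_congr rfl fun i _ => Finset.sum_congr rfl fun j _ =>
        (Algebra.TensorProduct.tmul_mul_tmul _ _ _ _).symm]
    rw [rx.eq, ry.eq, Bialgebra.comul_mul]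

@[simp] lemma reprMul_index {x y : H} {ι_rx : Type*} (rx : Repr k x ι_rx) {ι_ry : Type*} (ry : Repr k y ι_ry) :
    (reprMul rx ry).index = rx.index ×ˢ ry.index := rfl

@[simp] lemma reprMul_left {x y : H} {ι_rx : Type*} (rx : Repr k x ι_rx) {ι_ry : Type*} (ry : Repr k y ι_ry) (p : rx.ι × ry.ι) :
    (reprMul rx ry).left p = rx.left p.1 * ry.left p.2 := rfl

@[simp] lemma reprMul_right {x y : H} {ι_rx : Type*} (rx : Repr k x ι_rx) {ι_ry : Type*} (ry : Repr k y ι_ry) (p : rx.ι × ry.ι) :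
    (reprMul rx ry).right p = rx.right p.1 * ry.right p.2 := rfl

lemma rsmashMul₂_tmul (mH : H →ₗ[k] H →ₗ[k] H) (ract : A →ₗ[k] H →ₗ[k] A)
    (g h : H) (b a : A) :
    rsmashMul₂ mH ract (g ⊗ₜ b) (h ⊗ₜ a) =
      TensorProduct.map (mH g) (LinearMap.mulRight k a ∘ₗ ract b)
        (Coalgebra.comul (R := k) h) := by
  have key : ∀ c : H ⊗[k] H,
      (TensorProduct.map (TensorProduct.lift mH)
        ((LinearMap.mul' k A) ∘ₗ (LinearMap.rTensor A (TensorProduct.lift ract)) ∘ₗ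
          (TensorProduct.assoc k A H A).symm.toLinearMap))
      ((TensorProduct.tensorTensorTensorComm k H A H (H ⊗[k] A))
        ((g ⊗ₜ b) ⊗ₜ ((TensorProduct.assoc k H H A) (c ⊗ₜ a)))) =
      TensorProduct.map (mH g) (LinearMap.mulRight k a ∘ₗ ract b) c := by
    intro c
    induction c using TensorProduct.induction_on with
    | zero => simp only [zero_tmul, map_zero, tmul_zero]
    | tmul h1 h2 =>
        simp only [TensorProduct.assoc_tmul, TensorProduct.tensorTensorTensorComm_tmul,
          TensorProduct.map_tmul, TensorProduct.lift.tmul, LinearMap.coe_comp,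
          Function.comp_apply, LinearEquiv.coe_coe, TensorProduct.assoc_symm_tmul,
          LinearMap.rTensor_tmul, LinearMap.mul'_apply, LinearMap.mulRight_apply]
    | add x y hx hy => simp only [tmul_add, add_tmul, map_add, hx, hy]
  simpa [rsmashMul₂, rsmashMul] using key (Coalgebra.comul h)

variable (ract : A →ₗ[k] H →ₗ[k] A)

lemma opSmashMul₂_tmul (g h : H) (b a : A) {ι_r : Type*} (r : Repr k h ι_r) :
    opSmashMul₂ ract (g ⊗ₜ b) (h ⊗ₜ a) =
      ∑ i ∈ r.index, (r.left i * g) ⊗ₜ (ract b (r.right i) * a) := by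
  rw [opSmashMul₂, rsmashMul₂_tmul, ← r.eq]
  simp only [map_sum, TensorProduct.map_tmul, LinearMap.flip_apply, LinearMap.mul_apply',
    LinearMap.coe_comp, Function.comp_apply, LinearMap.mulRight_apply]

lemma gamma0_repr {h : H} {ι_r : Type*} (r : Repr k h ι_r) :
    opSmashGamma0 ract h = ∑ i ∈ r.index, r.left i ⊗ₜ ract 1 (r.right i) := by
  rw [opSmashGamma0, LinearMap.comp_apply, LinearMap.flip_apply, TensorProduct.mk_apply,
    opSmashMul₂_tmul ract 1 h 1 1 r]
  simp only [mul_one]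

lemma sweedler_repr {B : Type*} [AddCommGroup B] [Module k B]
    (mul : B →ₗ[k] B →ₗ[k] B) (f g : H →ₗ[k] B) {v : H} {ι_r : Type*} (r : Repr k v ι_r) :
    sweedler mul f g v = ∑ i ∈ r.index, mul (f (r.left i)) (g (r.right i)) := by
  rw [sweedler, LinearMap.comp_apply, ← r.eq, map_sum]
  simp only [TensorProduct.lift.tmul, LinearMap.compl₂_apply, LinearMap.comp_apply]

lemma sweedlerCoop_repr {B : Type*} [AddCommGroup B] [Module k B]
    (mul : B →ₗ[k] B →ₗ[k] B) (f g : H →ₗ[k] B) {v : H} {ι_r : Type*} (r : Repr k v ι_r) :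
    sweedlerCoop mul f g v = ∑ i ∈ r.index, mul (f (r.right i)) (g (r.left i)) := by
  rw [sweedlerCoop, LinearMap.comp_apply, LinearMap.comp_apply, LinearEquiv.coe_coe, ← r.eq,
    map_sum, map_sum]
  simp only [TensorProduct.comm_tmul, TensorProduct.lift.tmul, LinearMap.compl₂_apply,
    LinearMap.comp_apply]

variable (hr : IsRightPartialActionOp k ract)
include hr

lemma ract_merge (b : A) {v : H} {ι_r : Type*} (r : Repr k v ι_r) :
    ∑ i ∈ r.index, ract b (r.left i) * ract 1 (r.right i) = ract b v := by
  have h2 := hr.rpa2 b 1 v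
  rw [sweedler_repr (LinearMap.mul k A) (ract b) (ract 1) r] at h2
  simpa only [mul_one, LinearMap.mul_apply'] using h2.symm

lemma rpa3_repr (a : A) (g : H) {v : H} {ι_r : Type*} (r : Repr k v ι_r) :
    ract (ract a g) v = ∑ i ∈ r.index, ract a (r.left i * g) * ract 1 (r.right i) := by
  have h3 := hr.rpa3 a g v
  rw [sweedler_repr (LinearMap.mul k A) _ _ r] at h3
  simpa only [LinearMap.mul_apply', LinearMap.comp_apply, LinearMap.mulRight_apply] using h3

lemma rpa3'_repr (a : A) (g : H) {v : H} {ι_r : Type*} (r : Repr k v ι_r) :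
    ract (ract a g) v = ∑ i ∈ r.index, ract 1 (r.left i) * ract a (r.right i * g) := by
  have h3 := hr.rpa3' a g v
  rw [sweedler_repr (LinearMap.mul k A) _ _ r] at h3
  simpa only [LinearMap.mul_apply', LinearMap.comp_apply, LinearMap.mulRight_apply] using h3

/-- Multiplying any element on the right by `γ₀ h`. -/
lemma mulB_gamma0 (w : H ⊗[k] A) {h : H} {ι_r : Type*} (r : Repr k h ι_r) :
    opSmashMul₂ ract w (opSmashGamma0 ract h) =
      ∑ i ∈ r.index,
        TensorProduct.map (LinearMap.mulLeft k (r.left i)) (ract.flip (r.right i)) w := by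
  induction w using TensorProduct.induction_on with
  | zero => simp only [map_zero, LinearMap.zero_apply, Finset.sum_const_zero]
  | add x y hx hy => simp only [map_add, LinearMap.add_apply, hx, hy, Finset.sum_add_distrib]
  | tmul g b =>
    set a₁ : ∀ i, Repr k (r.left i) (H × H) := fun i => ℛ k (r.left i) with ha₁
    set a₂ : ∀ i, Repr k (r.right i) (H × H) := fun i => ℛ k (r.right i) with ha₂
    set Φ : H ⊗[k] (H ⊗[k] H) →ₗ[k] H ⊗[k] A :=
      TensorProduct.map (LinearMap.mulRight k g)
        ((LinearMap.mul' k A) ∘ₗ TensorProduct.map (ract b) (ract 1)) with hΦ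
    have hΦ_apply : ∀ x y z : H,
        Φ (x ⊗ₜ (y ⊗ₜ z)) = (x * g) ⊗ₜ (ract b y * ract 1 z) := by
      intro x y z
      simp only [hΦ, TensorProduct.map_tmul, LinearMap.mulRight_apply, LinearMap.comp_apply,
        LinearMap.mul'_apply]
    have step1 : opSmashMul₂ ract (g ⊗ₜ b) (opSmashGamma0 ract h) =
        ∑ i ∈ r.index, ∑ j ∈ (a₁ i).index,
          Φ ((a₁ i).left j ⊗ₜ ((a₁ i).right j ⊗ₜ r.right i)) := by
      rw [gamma0_repr ract r, map_sum]
      refine Finset.sum_congr rfl fun i _ => ?_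
      rw [opSmashMul₂_tmul ract g (r.left i) b (ract 1 (r.right i)) (a₁ i)]
      exact Finset.sum_congr rfl fun j _ => (hΦ_apply _ _ _).symm
    rw [step1, coassoc_sum r a₁ a₂ Φ]
    refine Finset.sum_congr rfl fun i _ => ?_
    have : ∀ j ∈ (a₂ i).index,
        Φ (r.left i ⊗ₜ ((a₂ i).left j ⊗ₜ (a₂ i).right j)) =
          (r.left i * g) ⊗ₜ (ract b ((a₂ i).left j) * ract 1 ((a₂ i).right j)) :=
      fun j _ => hΦ_apply _ _ _
    rw [Finset.sum_congr rfl this, ← TensorProduct.tmul_sum, ract_merge ract hr b (a₂ i)]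
    simp only [TensorProduct.map_tmul, LinearMap.mulLeft_apply, LinearMap.flip_apply]

/-- The product `γ₀ x · γ₀ K` in the smash product. -/
lemma gamma0_mul_gamma0 {x K : H} {ι_rx : Type*} (rx : Repr k x ι_rx) {ι_rK : Type*} (rK : Repr k K ι_rK) :
    opSmashMul₂ ract (opSmashGamma0 ract x) (opSmashGamma0 ract K) =
      ∑ i ∈ rK.index, ∑ m ∈ rx.index,
        (rK.left i * rx.left m) ⊗ₜ ract (ract 1 (rx.right m)) (rK.right i) := by
  rw [mulB_gamma0 ract hr _ rK]
  refine Finset.sum_congr rfl fun i _ => ?_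
  rw [gamma0_repr ract rx, map_sum]
  refine Finset.sum_congr rfl fun m _ => ?_
  simp only [TensorProduct.map_tmul, LinearMap.mulLeft_apply, LinearMap.flip_apply]


/-- Collapse `Σ S(h₍2₎) h₍3₎ = ε` in a three-leg sum (legs `(p,q) = Δ(left)`, `right`). -/
lemma collapseS' {M : Type*} [AddCommGroup M] [Module k M]
    (G : H ⊗[k] H →ₗ[k] M) (v : H) :
    ∑ i ∈ (ℛ k v).index, ∑ j ∈ (ℛ k ((ℛ k v).left i)).index,
      G ((ℛ k ((ℛ k v).left i)).left j ⊗ₜ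
         ((aS (k := k)) ((ℛ k ((ℛ k v).left i)).right j) * (ℛ k v).right i)) =
    G (v ⊗ₜ (1 : H)) := by
  set r := ℛ k v
  set a₁ : ∀ i, Repr k (r.left i) (H × H) := fun i => ℛ k (r.left i) with ha₁
  set a₂ : ∀ i, Repr k (r.right i) (H × H) := fun i => ℛ k (r.right i) with ha₂
  set Φ : H ⊗[k] (H ⊗[k] H) →ₗ[k] M :=
    G ∘ₗ LinearMap.lTensor H
      ((LinearMap.mul' k H) ∘ₗ TensorProduct.map (aS (k := k)) LinearMap.id) with hΦ
  have hΦ_apply : ∀ x y z : H, Φ (x ⊗ₜ (y ⊗ₜ z)) = G (x ⊗ₜ ((aS (k := k)) y * z)) := by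
    intro x y z
    simp only [hΦ, LinearMap.comp_apply, LinearMap.lTensor_tmul, TensorProduct.map_tmul,
      LinearMap.mul'_apply, LinearMap.id_coe, id_eq]
  have lhs_eq : ∑ i ∈ r.index, ∑ j ∈ (a₁ i).index,
      G ((a₁ i).left j ⊗ₜ ((aS (k := k)) ((a₁ i).right j) * r.right i)) =
      ∑ i ∈ r.index, ∑ j ∈ (a₁ i).index,
        Φ ((a₁ i).left j ⊗ₜ ((a₁ i).right j ⊗ₜ r.right i)) :=
    Finset.sum_congr rfl fun i _ => Finset.sum_congr rfl fun j _ => (hΦ_apply _ _ _).symm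
  rw [lhs_eq, coassoc_sum r a₁ a₂ Φ]
  have step : ∀ i ∈ r.index,
      ∑ j ∈ (a₂ i).index, Φ (r.left i ⊗ₜ ((a₂ i).left j ⊗ₜ (a₂ i).right j)) =
        counit (R := k) (r.right i) • G (r.left i ⊗ₜ (1 : H)) := by
    intro i _
    have : ∀ j ∈ (a₂ i).index,
        Φ (r.left i ⊗ₜ ((a₂ i).left j ⊗ₜ (a₂ i).right j)) =
          (G ∘ₗ TensorProduct.mk k H H (r.left i))
            ((aS (k := k)) ((a₂ i).left j) * (a₂ i).right j) := by
      intro j _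
      rw [hΦ_apply]
      rfl
    rw [Finset.sum_congr rfl this,
      antipode_mul_sum (a₂ i) (G ∘ₗ TensorProduct.mk k H H (r.left i))]
    rfl
  rw [Finset.sum_congr rfl step]
  have := counit_right_sum r (G ∘ₗ (TensorProduct.mk k H H).flip (1 : H))
  simpa only [LinearMap.comp_apply, LinearMap.flip_apply, TensorProduct.mk_apply] using this

/-- Collapse `Σ S(h₍2₎) h₍3₎ = ε` in a four-leg sum
(legs `(p,q) = Δ(left)`, `(c,d) = Δ(right)`; the middle pair collapses). -/
lemma collapseS {M : Type*} [AddCommGroup M] [Module k M]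
    (G : H ⊗[k] (H ⊗[k] H) →ₗ[k] M) (v : H) :
    ∑ i ∈ (ℛ k v).index, ∑ j ∈ (ℛ k ((ℛ k v).left i)).index,
      ∑ m ∈ (ℛ k ((ℛ k v).right i)).index,
        G ((ℛ k ((ℛ k v).left i)).left j ⊗ₜ
           (((aS (k := k)) ((ℛ k ((ℛ k v).left i)).right j) *
               (ℛ k ((ℛ k v).right i)).left m) ⊗ₜ
             (ℛ k ((ℛ k v).right i)).right m)) =
    ∑ i ∈ (ℛ k v).index, G ((ℛ k v).left i ⊗ₜ ((1 : H) ⊗ₜ (ℛ k v).right i)) := by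
  set r := ℛ k v
  set a₁ : ∀ i, Repr k (r.left i) (H × H) := fun i => ℛ k (r.left i) with ha₁
  set a₂ : ∀ i, Repr k (r.right i) (H × H) := fun i => ℛ k (r.right i) with ha₂
  set Θ : H ⊗[k] (H ⊗[k] H) →ₗ[k] H ⊗[k] H :=
    (LinearMap.rTensor H ((LinearMap.mul' k H) ∘ₗ
        TensorProduct.map (aS (k := k)) LinearMap.id)) ∘ₗ
      (TensorProduct.assoc k H H H).symm.toLinearMap with hΘ
  have hΘ_apply : ∀ x y z : H, Θ (x ⊗ₜ (y ⊗ₜ z)) = ((aS (k := k)) x * y) ⊗ₜ z := by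
    intro x y z
    simp only [hΘ, LinearMap.comp_apply, LinearEquiv.coe_coe, TensorProduct.assoc_symm_tmul,
      LinearMap.rTensor_tmul, TensorProduct.map_tmul, LinearMap.mul'_apply,
      LinearMap.id_coe, id_eq]
  set Φ₁ : H ⊗[k] (H ⊗[k] H) →ₗ[k] M :=
    G ∘ₗ LinearMap.lTensor H (Θ ∘ₗ LinearMap.lTensor H (comul : H →ₗ[k] H ⊗[k] H)) with hΦ₁
  have hΦ₁_apply : ∀ x y z : H, Φ₁ (x ⊗ₜ (y ⊗ₜ z)) =
      ∑ m ∈ (ℛ k z).index,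
        G (x ⊗ₜ (((aS (k := k)) y * (ℛ k z).left m) ⊗ₜ (ℛ k z).right m)) := by
    intro x y z
    simp only [hΦ₁, LinearMap.comp_apply, LinearMap.lTensor_tmul]
    rw [← (ℛ k z).eq, TensorProduct.tmul_sum, map_sum, TensorProduct.tmul_sum, map_sum]
    exact Finset.sum_congr rfl fun m _ => by rw [hΘ_apply]
  have lhs_eq : ∑ i ∈ r.index, ∑ j ∈ (a₁ i).index,
      ∑ m ∈ (ℛ k (r.right i)).index,
        G ((a₁ i).left j ⊗ₜ
           (((aS (k := k)) ((a₁ i).right j) * (ℛ k (r.right i)).left m) ⊗ₜ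
             (ℛ k (r.right i)).right m)) =
      ∑ i ∈ r.index, ∑ j ∈ (a₁ i).index,
        Φ₁ ((a₁ i).left j ⊗ₜ ((a₁ i).right j ⊗ₜ r.right i)) :=
    Finset.sum_congr rfl fun i _ => Finset.sum_congr rfl fun j _ => (hΦ₁_apply _ _ _).symm
  rw [lhs_eq, coassoc_sum r a₁ a₂ Φ₁]
  refine Finset.sum_congr rfl fun i _ => ?_
  -- now collapse inside the right branch
  set b₁ : ∀ j, Repr k ((a₂ i).left j) (H × H) := fun j => ℛ k ((a₂ i).left j) with hb₁
  set b₂ : ∀ j, Repr k ((a₂ i).right j) (H × H) := fun j => ℛ k ((a₂ i).right j) with hb₂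
  set Φ₂ : H ⊗[k] (H ⊗[k] H) →ₗ[k] M :=
    G ∘ₗ TensorProduct.mk k H (H ⊗[k] H) (r.left i) ∘ₗ Θ with hΦ₂
  have hΦ₂_apply : ∀ x y z : H,
      Φ₂ (x ⊗ₜ (y ⊗ₜ z)) = G (r.left i ⊗ₜ (((aS (k := k)) x * y) ⊗ₜ z)) := by
    intro x y z
    simp only [hΦ₂, LinearMap.comp_apply, hΘ_apply, TensorProduct.mk_apply]
  have e1 : ∑ j ∈ (a₂ i).index, Φ₁ (r.left i ⊗ₜ ((a₂ i).left j ⊗ₜ (a₂ i).right j)) =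
      ∑ j ∈ (a₂ i).index, ∑ m ∈ (b₂ j).index,
        Φ₂ ((a₂ i).left j ⊗ₜ ((b₂ j).left m ⊗ₜ (b₂ j).right m)) := by
    refine Finset.sum_congr rfl fun j _ => ?_
    rw [hΦ₁_apply]
    exact Finset.sum_congr rfl fun m _ => (hΦ₂_apply _ _ _).symm
  rw [e1, ← coassoc_sum (a₂ i) b₁ b₂ Φ₂]
  have e2 : ∀ j ∈ (a₂ i).index,
      ∑ m ∈ (b₁ j).index,
        Φ₂ ((b₁ j).left m ⊗ₜ ((b₁ j).right m ⊗ₜ (a₂ i).right j)) =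
        counit (R := k) ((a₂ i).left j) •
          G (r.left i ⊗ₜ ((1 : H) ⊗ₜ (a₂ i).right j)) := by
    intro j _
    have : ∀ m ∈ (b₁ j).index,
        Φ₂ ((b₁ j).left m ⊗ₜ ((b₁ j).right m ⊗ₜ (a₂ i).right j)) =
          (G ∘ₗ TensorProduct.mk k H (H ⊗[k] H) (r.left i) ∘ₗ
            (TensorProduct.mk k H H).flip ((a₂ i).right j))
            ((aS (k := k)) ((b₁ j).left m) * (b₁ j).right m) := by
      intro m _
      rw [hΦ₂_apply]
      rfl
    rw [Finset.sum_congr rfl this, antipode_mul_sum (b₁ j)]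
    rfl
  rw [Finset.sum_congr rfl e2]
  have := counit_left_sum (a₂ i) (G ∘ₗ TensorProduct.mk k H (H ⊗[k] H) (r.left i) ∘ₗ
      TensorProduct.mk k H H (1 : H))
  simpa only [LinearMap.comp_apply, TensorProduct.mk_apply] using this


/-- `Σ (1·v₍2₎)·(w ·op S(v₍1₎)) = 1·S(v)·w`-type identity. -/
lemma ract_rho_antipode (w v : H) :
    ∑ i ∈ (ℛ k v).index,
      ract (ract 1 ((ℛ k v).right i)) (w * (aS (k := k)) ((ℛ k v).left i)) =
      ract (ract 1 ((aS (k := k)) v)) w := by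
  have expand : ∀ i ∈ (ℛ k v).index,
      ract (ract 1 ((ℛ k v).right i)) (w * (aS (k := k)) ((ℛ k v).left i)) =
        ∑ j ∈ (ℛ k w).index, ∑ t ∈ (ℛ k ((ℛ k v).left i)).index,
          (LinearMap.mul' k A ∘ₗ
            TensorProduct.map (ract 1 ∘ₗ LinearMap.mulLeft k ((ℛ k w).left j))
              (ract 1 ∘ₗ LinearMap.mulLeft k ((ℛ k w).right j) ∘ₗ (aS (k := k))) ∘ₗ
            (TensorProduct.comm k H H).toLinearMap)
          ((ℛ k ((ℛ k v).left i)).left t ⊗ₜ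
            ((aS (k := k)) ((ℛ k ((ℛ k v).left i)).right t) * (ℛ k v).right i)) := by
    intro i _
    rw [rpa3_repr ract hr 1 ((ℛ k v).right i)
      (reprMul (ℛ k w) (reprAntipode (ℛ k ((ℛ k v).left i))))]
    rw [reprMul_index, Finset.sum_product]
    refine Finset.sum_congr rfl fun j _ => Finset.sum_congr rfl fun t _ => ?_
    simp only [reprMul_left, reprMul_right, reprAntipode_left, reprAntipode_right,
      LinearMap.comp_apply, LinearEquiv.coe_coe, TensorProduct.comm_tmul,
      TensorProduct.map_tmul, LinearMap.mul'_apply, LinearMap.mulLeft_apply, mul_assoc]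
  rw [Finset.sum_congr rfl expand]
  rw [Finset.sum_comm]
  have coll : ∀ j ∈ (ℛ k w).index,
      ∑ i ∈ (ℛ k v).index, ∑ t ∈ (ℛ k ((ℛ k v).left i)).index,
        (LinearMap.mul' k A ∘ₗ
          TensorProduct.map (ract 1 ∘ₗ LinearMap.mulLeft k ((ℛ k w).left j))
            (ract 1 ∘ₗ LinearMap.mulLeft k ((ℛ k w).right j) ∘ₗ (aS (k := k))) ∘ₗ
          (TensorProduct.comm k H H).toLinearMap)
        ((ℛ k ((ℛ k v).left i)).left t ⊗ₜ
          ((aS (k := k)) ((ℛ k ((ℛ k v).left i)).right t) * (ℛ k v).right i)) =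
        ract 1 ((ℛ k w).left j) *
          ract 1 ((ℛ k w).right j * (aS (k := k)) v) := by
    intro j _
    rw [collapseS' ract hr _ v]
    simp only [LinearMap.comp_apply, LinearEquiv.coe_coe, TensorProduct.comm_tmul,
      TensorProduct.map_tmul, LinearMap.mul'_apply, LinearMap.mulLeft_apply, mul_one]
  rw [Finset.sum_congr rfl coll]
  exact (rpa3'_repr ract hr 1 ((aS (k := k)) v) (ℛ k w)).symm

/-- The key exchange identity for (PR2). -/
lemma key_exchange (x v : H) :
    ∑ i ∈ (ℛ k v).index,
      ract (ract (ract 1 x) ((ℛ k v).right i)) ((aS (k := k)) ((ℛ k v).left i)) =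
    ∑ i ∈ (ℛ k v).index,
      ract (ract 1 ((ℛ k v).right i * x)) ((aS (k := k)) ((ℛ k v).left i)) := by
  set Gleft : H ⊗[k] H →ₗ[k] A :=
    LinearMap.mul' k A ∘ₗ
      TensorProduct.map (ract (ract 1 x)) (ract 1 ∘ₗ (aS (k := k))) ∘ₗ
      (TensorProduct.comm k H H).toLinearMap with hGleft
  set Gright : H ⊗[k] H →ₗ[k] A :=
    LinearMap.mul' k A ∘ₗ
      TensorProduct.map (ract 1 ∘ₗ LinearMap.mulRight k x) (ract 1 ∘ₗ (aS (k := k))) ∘ₗ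
      (TensorProduct.comm k H H).toLinearMap with hGright
  have expandL : ∀ i ∈ (ℛ k v).index,
      ract (ract (ract 1 x) ((ℛ k v).right i)) ((aS (k := k)) ((ℛ k v).left i)) =
        ∑ t ∈ (ℛ k ((ℛ k v).left i)).index,
          Gleft ((ℛ k ((ℛ k v).left i)).left t ⊗ₜ
            ((aS (k := k)) ((ℛ k ((ℛ k v).left i)).right t) * (ℛ k v).right i)) := by
    intro i _
    rw [rpa3_repr ract hr (ract 1 x) ((ℛ k v).right i)
      (reprAntipode (ℛ k ((ℛ k v).left i)))]
    rw [reprAntipode_index]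
    refine Finset.sum_congr rfl fun t _ => ?_
    simp only [hGleft, reprAntipode_left, reprAntipode_right, LinearMap.comp_apply,
      LinearEquiv.coe_coe, TensorProduct.comm_tmul, TensorProduct.map_tmul,
      LinearMap.mul'_apply]
  have expandR : ∀ i ∈ (ℛ k v).index,
      ract (ract 1 ((ℛ k v).right i * x)) ((aS (k := k)) ((ℛ k v).left i)) =
        ∑ t ∈ (ℛ k ((ℛ k v).left i)).index,
          Gright ((ℛ k ((ℛ k v).left i)).left t ⊗ₜ
            ((aS (k := k)) ((ℛ k ((ℛ k v).left i)).right t) * (ℛ k v).right i)) := by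
    intro i _
    rw [show ract 1 ((ℛ k v).right i * x) = ract (ract 1 ((ℛ k v).right i * x)) 1 from
      (hr.rpa1 _).symm]
    rw [show (ract (ract 1 ((ℛ k v).right i * x)) 1 : A) =
      ract (ract 1 ((ℛ k v).right i * x)) 1 from rfl]
    rw [hr.rpa1]
    rw [rpa3_repr ract hr 1 ((ℛ k v).right i * x) (reprAntipode (ℛ k ((ℛ k v).left i)))]
    rw [reprAntipode_index]
    refine Finset.sum_congr rfl fun t _ => ?_
    simp only [hGright, reprAntipode_left, reprAntipode_right, LinearMap.comp_apply,
      LinearEquiv.coe_coe, TensorProduct.comm_tmul, TensorProduct.map_tmul,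
      LinearMap.mul'_apply, LinearMap.mulRight_apply, mul_assoc]
  rw [Finset.sum_congr rfl expandL, Finset.sum_congr rfl expandR,
    collapseS' ract hr Gleft v, collapseS' ract hr Gright v]
  simp only [hGleft, hGright, LinearMap.comp_apply, LinearEquiv.coe_coe, TensorProduct.comm_tmul,
    TensorProduct.map_tmul, LinearMap.mul'_apply, LinearMap.mulRight_apply, hr.rpa1, one_mul]


/-- `Σ γ₀(h₍2₎) γ₀(S h₍1₎) = 1 # (1·S h)`. -/
lemma gammaE (h : H) :
    sweedlerCoop (opSmashMul₂ ract) (opSmashGamma0 ract)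
      (opSmashGamma0 ract ∘ₗ (aS (k := k))) h =
      (1 : H) ⊗ₜ ract 1 ((aS (k := k)) h) := by
  rw [sweedlerCoop_repr _ _ _ (ℛ k h)]
  set GE : H ⊗[k] (H ⊗[k] H) →ₗ[k] H ⊗[k] A :=
    (TensorProduct.map LinearMap.id
      (TensorProduct.lift ((ract ∘ₗ ract 1).compl₂ (aS (k := k))))) ∘ₗ
      (TensorProduct.assoc k H H H).toLinearMap ∘ₗ
      (TensorProduct.comm k H (H ⊗[k] H)).toLinearMap with hGE
  have hGE_apply : ∀ x z w : H,
      GE (x ⊗ₜ (z ⊗ₜ w)) = z ⊗ₜ ract (ract 1 w) ((aS (k := k)) x) := by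
    intro x z w
    simp only [hGE, LinearMap.comp_apply, LinearEquiv.coe_coe, TensorProduct.comm_tmul,
      TensorProduct.assoc_tmul, TensorProduct.map_tmul, LinearMap.id_coe, id_eq,
      TensorProduct.lift.tmul, LinearMap.compl₂_apply]
  have expand : ∀ i ∈ (ℛ k h).index,
      opSmashMul₂ ract (opSmashGamma0 ract ((ℛ k h).right i))
        ((opSmashGamma0 ract ∘ₗ (aS (k := k))) ((ℛ k h).left i)) =
        ∑ j ∈ (ℛ k ((ℛ k h).left i)).index, ∑ m ∈ (ℛ k ((ℛ k h).right i)).index,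
          GE ((ℛ k ((ℛ k h).left i)).left j ⊗ₜ
            (((aS (k := k)) ((ℛ k ((ℛ k h).left i)).right j) *
                (ℛ k ((ℛ k h).right i)).left m) ⊗ₜ
              (ℛ k ((ℛ k h).right i)).right m)) := by
    intro i _
    rw [LinearMap.comp_apply,
      gamma0_mul_gamma0 ract hr (ℛ k ((ℛ k h).right i))
        (reprAntipode (ℛ k ((ℛ k h).left i)))]
    rw [reprAntipode_index]
    refine Finset.sum_congr rfl fun j _ => Finset.sum_congr rfl fun m _ => ?_
    rw [hGE_apply, reprAntipode_left, reprAntipode_right]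
  rw [Finset.sum_congr rfl expand, collapseS ract hr GE h]
  have final : ∀ i ∈ (ℛ k h).index,
      GE ((ℛ k h).left i ⊗ₜ ((1 : H) ⊗ₜ (ℛ k h).right i)) =
        (1 : H) ⊗ₜ ract (ract 1 ((ℛ k h).right i))
          ((1 : H) * (aS (k := k)) ((ℛ k h).left i)) := by
    intro i _
    rw [hGE_apply, one_mul]
  rw [Finset.sum_congr rfl final, ← TensorProduct.tmul_sum,
    ract_rho_antipode ract hr 1 h, hr.rpa1]


/-- (PR2) for `γ₀`. -/
lemma pr2 (h kk : H) :
    sweedlerCoop (opSmashMul₂ ract) ((opSmashMul₂ ract (opSmashGamma0 ract h)) ∘ₗ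
        opSmashGamma0 ract) (opSmashGamma0 ract ∘ₗ (aS (k := k))) kk =
    sweedlerCoop (opSmashMul₂ ract) (opSmashGamma0 ract ∘ₗ LinearMap.mulRight k h)
      (opSmashGamma0 ract ∘ₗ (aS (k := k))) kk := by
  rw [sweedlerCoop_repr _ _ _ (ℛ k kk), sweedlerCoop_repr _ _ _ (ℛ k kk)]
  set Gl : H ⊗[k] (H ⊗[k] H) →ₗ[k] H ⊗[k] A :=
    ∑ n ∈ (ℛ k h).index,
      (TensorProduct.map (LinearMap.mulRight k ((ℛ k h).left n))
        (TensorProduct.lift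
          ((ract ∘ₗ (ract (ract 1 ((ℛ k h).right n)))).compl₂ (aS (k := k))))) ∘ₗ
        (TensorProduct.assoc k H H H).toLinearMap ∘ₗ
        (TensorProduct.comm k H (H ⊗[k] H)).toLinearMap with hGl
  set Gr : H ⊗[k] (H ⊗[k] H) →ₗ[k] H ⊗[k] A :=
    ∑ n ∈ (ℛ k h).index,
      (TensorProduct.map (LinearMap.mulRight k ((ℛ k h).left n))
        (TensorProduct.lift
          ((ract ∘ₗ ract 1 ∘ₗ LinearMap.mulRight k ((ℛ k h).right n)).compl₂
            (aS (k := k))))) ∘ₗ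
        (TensorProduct.assoc k H H H).toLinearMap ∘ₗ
        (TensorProduct.comm k H (H ⊗[k] H)).toLinearMap with hGr
  have hGl_apply : ∀ x z w : H,
      Gl (x ⊗ₜ (z ⊗ₜ w)) = ∑ n ∈ (ℛ k h).index,
        (z * (ℛ k h).left n) ⊗ₜ
          ract (ract (ract 1 ((ℛ k h).right n)) w) ((aS (k := k)) x) := by
    intro x z w
    rw [hGl, LinearMap.sum_apply]
    refine Finset.sum_congr rfl fun n _ => ?_
    simp only [LinearMap.comp_apply, LinearEquiv.coe_coe, TensorProduct.comm_tmul,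
      TensorProduct.assoc_tmul, TensorProduct.map_tmul, LinearMap.mulRight_apply,
      TensorProduct.lift.tmul, LinearMap.compl₂_apply]
  have hGr_apply : ∀ x z w : H,
      Gr (x ⊗ₜ (z ⊗ₜ w)) = ∑ n ∈ (ℛ k h).index,
        (z * (ℛ k h).left n) ⊗ₜ
          ract (ract 1 (w * (ℛ k h).right n)) ((aS (k := k)) x) := by
    intro x z w
    rw [hGr, LinearMap.sum_apply]
    refine Finset.sum_congr rfl fun n _ => ?_
    simp only [LinearMap.comp_apply, LinearEquiv.coe_coe, TensorProduct.comm_tmul,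
      TensorProduct.assoc_tmul, TensorProduct.map_tmul, LinearMap.mulRight_apply,
      TensorProduct.lift.tmul, LinearMap.compl₂_apply]
  have expandL : ∀ i ∈ (ℛ k kk).index,
      opSmashMul₂ ract
        ((opSmashMul₂ ract (opSmashGamma0 ract h) ∘ₗ opSmashGamma0 ract)
          ((ℛ k kk).right i))
        ((opSmashGamma0 ract ∘ₗ (aS (k := k))) ((ℛ k kk).left i)) =
      ∑ j ∈ (ℛ k ((ℛ k kk).left i)).index, ∑ m ∈ (ℛ k ((ℛ k kk).right i)).index,
        Gl ((ℛ k ((ℛ k kk).left i)).left j ⊗ₜ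
          (((aS (k := k)) ((ℛ k ((ℛ k kk).left i)).right j) *
              (ℛ k ((ℛ k kk).right i)).left m) ⊗ₜ
            (ℛ k ((ℛ k kk).right i)).right m)) := by
    intro i _
    rw [LinearMap.comp_apply, LinearMap.comp_apply,
      mulB_gamma0 ract hr _ (reprAntipode (ℛ k ((ℛ k kk).left i))),
      gamma0_mul_gamma0 ract hr (ℛ k h) (ℛ k ((ℛ k kk).right i))]
    rw [reprAntipode_index]
    refine Finset.sum_congr rfl fun j _ => ?_
    rw [map_sum]
    refine Finset.sum_congr rfl fun m _ => ?_
    rw [map_sum, hGl_apply]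
    refine Finset.sum_congr rfl fun n _ => ?_
    simp only [reprAntipode_left, reprAntipode_right, TensorProduct.map_tmul,
      LinearMap.mulLeft_apply, LinearMap.flip_apply, mul_assoc]
  have expandR : ∀ i ∈ (ℛ k kk).index,
      opSmashMul₂ ract
        ((opSmashGamma0 ract ∘ₗ LinearMap.mulRight k h) ((ℛ k kk).right i))
        ((opSmashGamma0 ract ∘ₗ (aS (k := k))) ((ℛ k kk).left i)) =
      ∑ j ∈ (ℛ k ((ℛ k kk).left i)).index, ∑ m ∈ (ℛ k ((ℛ k kk).right i)).index,
        Gr ((ℛ k ((ℛ k kk).left i)).left j ⊗ₜ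
          (((aS (k := k)) ((ℛ k ((ℛ k kk).left i)).right j) *
              (ℛ k ((ℛ k kk).right i)).left m) ⊗ₜ
            (ℛ k ((ℛ k kk).right i)).right m)) := by
    intro i _
    rw [LinearMap.comp_apply, LinearMap.comp_apply, LinearMap.mulRight_apply,
      gamma0_mul_gamma0 ract hr (reprMul (ℛ k ((ℛ k kk).right i)) (ℛ k h))
        (reprAntipode (ℛ k ((ℛ k kk).left i)))]
    rw [reprAntipode_index]
    refine Finset.sum_congr rfl fun j _ => ?_
    rw [reprMul_index, Finset.sum_product]
    refine Finset.sum_congr rfl fun m _ => ?_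
    rw [hGr_apply]
    refine Finset.sum_congr rfl fun n _ => ?_
    simp only [reprMul_left, reprMul_right, reprAntipode_left, reprAntipode_right,
      mul_assoc]
  rw [Finset.sum_congr rfl expandL, Finset.sum_congr rfl expandR,
    collapseS ract hr Gl kk, collapseS ract hr Gr kk]
  have finL : ∀ i ∈ (ℛ k kk).index,
      Gl ((ℛ k kk).left i ⊗ₜ ((1 : H) ⊗ₜ (ℛ k kk).right i)) =
      ∑ n ∈ (ℛ k h).index, (ℛ k h).left n ⊗ₜ
        ract (ract (ract 1 ((ℛ k h).right n)) ((ℛ k kk).right i))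
          ((aS (k := k)) ((ℛ k kk).left i)) := by
    intro i _
    rw [hGl_apply]
    exact Finset.sum_congr rfl fun n _ => by rw [one_mul]
  have finR : ∀ i ∈ (ℛ k kk).index,
      Gr ((ℛ k kk).left i ⊗ₜ ((1 : H) ⊗ₜ (ℛ k kk).right i)) =
      ∑ n ∈ (ℛ k h).index, (ℛ k h).left n ⊗ₜ
        ract (ract 1 ((ℛ k kk).right i * (ℛ k h).right n))
          ((aS (k := k)) ((ℛ k kk).left i)) := by
    intro i _
    rw [hGr_apply]
    exact Finset.sum_congr rfl fun n _ => by rw [one_mul]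
  rw [Finset.sum_congr rfl finL, Finset.sum_congr rfl finR]
  rw [Finset.sum_comm]
  conv_rhs => rw [Finset.sum_comm]
  refine Finset.sum_congr rfl fun n _ => ?_
  rw [← TensorProduct.tmul_sum, ← TensorProduct.tmul_sum]
  congr 1
  exact key_exchange ract hr ((ℛ k h).right n) kk

/-- (PR3) for `γ₀`. -/
lemma pr3 (h g : H) :
    opSmashMul₂ ract
      (sweedlerCoop (opSmashMul₂ ract) (opSmashGamma0 ract)
        (opSmashGamma0 ract ∘ₗ (aS (k := k))) h) (opSmashGamma0 ract g) =
    sweedlerCoop (opSmashMul₂ ract) (opSmashGamma0 ract)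
      (opSmashGamma0 ract ∘ₗ LinearMap.mulLeft k g ∘ₗ (aS (k := k))) h := by
  rw [gammaE ract hr h, mulB_gamma0 ract hr _ (ℛ k g),
    sweedlerCoop_repr _ _ _ (ℛ k h)]
  set G3 : H ⊗[k] (H ⊗[k] H) →ₗ[k] H ⊗[k] A :=
    ∑ j ∈ (ℛ k g).index,
      (TensorProduct.map (LinearMap.mulLeft k ((ℛ k g).left j))
        (TensorProduct.lift ((ract ∘ₗ ract 1).compl₂
          (LinearMap.mulLeft k ((ℛ k g).right j) ∘ₗ (aS (k := k)))))) ∘ₗ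
        (TensorProduct.assoc k H H H).toLinearMap ∘ₗ
        (TensorProduct.comm k H (H ⊗[k] H)).toLinearMap with hG3
  have hG3_apply : ∀ x z w : H,
      G3 (x ⊗ₜ (z ⊗ₜ w)) = ∑ j ∈ (ℛ k g).index,
        ((ℛ k g).left j * z) ⊗ₜ
          ract (ract 1 w) ((ℛ k g).right j * (aS (k := k)) x) := by
    intro x z w
    rw [hG3, LinearMap.sum_apply]
    refine Finset.sum_congr rfl fun j _ => ?_
    simp only [LinearMap.comp_apply, LinearEquiv.coe_coe, TensorProduct.comm_tmul,
      TensorProduct.assoc_tmul, TensorProduct.map_tmul, LinearMap.mulLeft_apply,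
      TensorProduct.lift.tmul, LinearMap.compl₂_apply]
  have expandR : ∀ i ∈ (ℛ k h).index,
      opSmashMul₂ ract (opSmashGamma0 ract ((ℛ k h).right i))
        ((opSmashGamma0 ract ∘ₗ LinearMap.mulLeft k g ∘ₗ (aS (k := k)))
          ((ℛ k h).left i)) =
      ∑ t ∈ (ℛ k ((ℛ k h).left i)).index, ∑ m ∈ (ℛ k ((ℛ k h).right i)).index,
        G3 ((ℛ k ((ℛ k h).left i)).left t ⊗ₜ
          (((aS (k := k)) ((ℛ k ((ℛ k h).left i)).right t) *
              (ℛ k ((ℛ k h).right i)).left m) ⊗ₜ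
            (ℛ k ((ℛ k h).right i)).right m)) := by
    intro i _
    rw [LinearMap.comp_apply, LinearMap.comp_apply, LinearMap.mulLeft_apply,
      gamma0_mul_gamma0 ract hr (ℛ k ((ℛ k h).right i))
        (reprMul (ℛ k g) (reprAntipode (ℛ k ((ℛ k h).left i))))]
    rw [reprMul_index, Finset.sum_product, Finset.sum_comm]
    refine Finset.sum_congr rfl fun t _ => ?_
    rw [Finset.sum_comm]
    refine Finset.sum_congr rfl fun m _ => ?_
    rw [hG3_apply]
    refine Finset.sum_congr rfl fun j _ => ?_
    simp only [reprMul_left, reprMul_right, reprAntipode_left, reprAntipode_right,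
      mul_assoc]
  rw [Finset.sum_congr rfl expandR, collapseS ract hr G3 h]
  have fin : ∀ i ∈ (ℛ k h).index,
      G3 ((ℛ k h).left i ⊗ₜ ((1 : H) ⊗ₜ (ℛ k h).right i)) =
      ∑ j ∈ (ℛ k g).index, (ℛ k g).left j ⊗ₜ
        ract (ract 1 ((ℛ k h).right i))
          ((ℛ k g).right j * (aS (k := k)) ((ℛ k h).left i)) := by
    intro i _
    rw [hG3_apply]
    exact Finset.sum_congr rfl fun j _ => by rw [mul_one]
  rw [Finset.sum_congr rfl fin, Finset.sum_comm]
  refine Finset.sum_congr rfl fun j _ => ?_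
  rw [← TensorProduct.tmul_sum, ract_rho_antipode ract hr ((ℛ k g).right j) h]
  simp only [TensorProduct.map_tmul, LinearMap.mulLeft_apply, LinearMap.flip_apply,
    mul_one]

end SmashLayer

end PartialRepAux

end

/-- For a right partial `H^op`-module algebra `A`, the map
`γ₀ : H^opcop → H^op # A`, `h ↦ h # 1_A`, is a partial representation of the Hopf
algebra `H^opcop` (opposite multiplication, coopposite comultiplication, antipode `S`)
in the right partial smash product algebra `H^op # A`: (PR1) `γ₀(1) = 1_{H#A}`;
(PR2) `γ₀(h)γ₀(k₍[1]₎)γ₀(S(k₍[2]₎)) = γ₀(h ·op k₍[1]₎)γ₀(S(k₍[2]₎))`;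
(PR3) `γ₀(h₍[1]₎)γ₀(S(h₍[2]₎))γ₀(g) = γ₀(h₍[1]₎)γ₀(S(h₍[2]₎) ·op g)`. -/
theorem opSmashGamma0_partialRep
    {k H A : Type*} [CommRing k] [Ring H] [HopfAlgebra k H] [Ring A] [Algebra k A]
    (ract : A →ₗ[k] H →ₗ[k] A) (hract : IsRightPartialActionOp k ract) :
    ∀ mulB : (H ⊗[k] A) →ₗ[k] (H ⊗[k] A) →ₗ[k] H ⊗[k] A, mulB = opSmashMul₂ ract →
    ∀ γ₀ : H →ₗ[k] H ⊗[k] A, γ₀ = opSmashGamma0 ract →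
      (γ₀ 1 = mulB ((1 : H) ⊗ₜ (1 : A)) ((1 : H) ⊗ₜ (1 : A))) ∧
      (∀ h kk : H,
        sweedlerCoop mulB ((mulB (γ₀ h)) ∘ₗ γ₀)
          (γ₀ ∘ₗ (HopfAlgebra.antipode k : H →ₗ[k] H)) kk =
        sweedlerCoop mulB (γ₀ ∘ₗ LinearMap.mulRight k h)
          (γ₀ ∘ₗ (HopfAlgebra.antipode k : H →ₗ[k] H)) kk) ∧
      (∀ h g : H,
        mulB (sweedlerCoop mulB γ₀
            (γ₀ ∘ₗ (HopfAlgebra.antipode k : H →ₗ[k] H)) h) (γ₀ g) =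
        sweedlerCoop mulB γ₀
          (γ₀ ∘ₗ LinearMap.mulLeft k g ∘ₗ (HopfAlgebra.antipode k : H →ₗ[k] H)) h) := by
  intro mulB hmulB γ₀ hγ₀
  subst hmulB hγ₀
  exact ⟨rfl, fun h kk => PartialRepAux.pr2 ract hract h kk,
    fun h g => PartialRepAux.pr3 ract hract h g⟩
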